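/- (Ground state simulation.) There is an absolute constant C > 0 with the following property. Let H be a Hermitian N × N matrix with a nondegenerate smallest eigenvalue, with unit ground state |g⟩, and spectral gap δ > 0 between the smallest and second smallest eigenvalue. Suppose (H_sim, E) simulates H with error (η, ε) where 2ε < δ. Then the smallest eigenvalue of H_sim is also nondegenerate, and its unit ground state |g_sim⟩ can be chosen (by adjusting its phase) so that ‖ E|g⟩ − |g_sim⟩ ‖ ≤ η + C·ε/δ. -/

import Mathlib

open Matrix

noncomputable def opNorm {m n : Type*} [Fintype m] [Fintype n] [DecidableEq n]
    (A : Matrix m n ℂ) : ℝ :=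
  ‖LinearMap.toContinuousLinearMap (Matrix.toEuclideanLin A)‖

noncomputable def vecNorm {n : Type*} [Fintype n] (x : n → ℂ) : ℝ :=
  Real.sqrt (∑ i, ‖x i‖ ^ 2)

/-- `lam` is the list of eigenvalues of `A` in nondecreasing order, counted with
multiplicity: it is monotone and there is an orthonormal eigenbasis realizing it. -/
def IsSortedSpectrum {M : ℕ} (A : Matrix (Fin M) (Fin M) ℂ) (lam : Fin M → ℝ) : Prop :=
  Monotone lam ∧ ∃ w : Fin M → (Fin M → ℂ),
    (∀ i j, star (w i) ⬝ᵥ w j = if i = j then 1 else 0) ∧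
    ∀ i, A.mulVec (w i) = (lam i : ℂ) • w i

/-- `(Hsim, E)` simulates `H` with error `(η, ε)`: there is an isometry `Et` whose image
is spanned by `N` orthonormal eigenvectors of `Hsim` with the `N` smallest eigenvalues
(S1), with `‖H - Etᴴ Hsim Et‖ ≤ ε` (S2) and `‖E - Et‖ ≤ η` (S3). -/
def Simulates {N M : ℕ} (hNM : N ≤ M) (Hsim : Matrix (Fin M) (Fin M) ℂ)
    (E : Matrix (Fin M) (Fin N) ℂ) (H : Matrix (Fin N) (Fin N) ℂ) (η ε : ℝ) : Prop :=
  ∃ (lam : Fin M → ℝ) (Et : Matrix (Fin M) (Fin N) ℂ) (v : Fin N → (Fin M → ℂ)),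
    IsSortedSpectrum Hsim lam ∧
    Etᴴ * Et = 1 ∧
    (∀ i j, star (v i) ⬝ᵥ v j = if i = j then 1 else 0) ∧
    (∀ i, Hsim.mulVec (v i) = (lam (Fin.castLE hNM i) : ℂ) • v i) ∧
    LinearMap.range Et.mulVecLin = Submodule.span ℂ (Set.range v) ∧
    opNorm (H - Etᴴ * Hsim * Et) ≤ ε ∧
    opNorm (E - Et) ≤ η

namespace GSim
variable {n : ℕ}

noncomputable def ee {n : ℕ} (x : Fin n → ℂ) : EuclideanSpace ℂ (Fin n) :=
  (WithLp.equiv 2 _).symm x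

lemma vecNorm_eq (x : Fin n → ℂ) : vecNorm x = ‖ee x‖ := by
  rw [EuclideanSpace.norm_eq]; rfl

lemma inner_ee (x y : Fin n → ℂ) : (inner ℂ (ee x) (ee y) : ℂ) = star x ⬝ᵥ y := by
  rw [EuclideanSpace.inner_eq_star_dotProduct, dotProduct_comm]; rfl

lemma mulVec_ee (A : Matrix (Fin n) (Fin n) ℂ) (x : Fin n → ℂ) :
    ee (A *ᵥ x) = Matrix.toEuclideanLin A (ee x) := rfl

lemma ee_smul (c : ℂ) (x : Fin n → ℂ) : ee (c • x) = c • ee x := rfl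

lemma ee_sub (x y : Fin n → ℂ) : ee (x - y) = ee x - ee y := rfl

lemma opNorm_le (A : Matrix (Fin n) (Fin n) ℂ) (x : EuclideanSpace ℂ (Fin n)) :
    ‖Matrix.toEuclideanLin A x‖ ≤ opNorm A * ‖x‖ :=
  (LinearMap.toContinuousLinearMap (Matrix.toEuclideanLin A)).le_opNorm x

lemma opNorm_nonneg (A : Matrix (Fin n) (Fin n) ℂ) : 0 ≤ opNorm A := norm_nonneg _

noncomputable def onb (hn : 0 < n) (w : Fin n → (Fin n → ℂ))
    (hw : ∀ i j, star (w i) ⬝ᵥ w j = if i = j then 1 else 0) :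
    OrthonormalBasis (Fin n) ℂ (EuclideanSpace ℂ (Fin n)) := by
  haveI : Nonempty (Fin n) := ⟨⟨0, hn⟩⟩
  have hortho : Orthonormal ℂ (fun i => ee (w i)) := by
    rw [orthonormal_iff_ite]
    intro i j
    rw [inner_ee, hw]
  exact (basisOfLinearIndependentOfCardEqFinrank hortho.linearIndependent
    (by simp)).toOrthonormalBasis (by rwa [coe_basisOfLinearIndependentOfCardEqFinrank])

lemma onb_apply (hn : 0 < n) (w : Fin n → (Fin n → ℂ))
    (hw : ∀ i j, star (w i) ⬝ᵥ w j = if i = j then 1 else 0) (i : Fin n) :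
    onb hn w hw i = ee (w i) := by
  haveI : Nonempty (Fin n) := ⟨⟨0, hn⟩⟩
  unfold onb
  rw [Module.Basis.coe_toOrthonormalBasis, coe_basisOfLinearIndependentOfCardEqFinrank]

lemma norm_sq_repr (b : OrthonormalBasis (Fin n) ℂ (EuclideanSpace ℂ (Fin n)))
    (x : EuclideanSpace ℂ (Fin n)) : ‖x‖ ^ 2 = ∑ i, ‖b.repr x i‖ ^ 2 := by
  rw [← b.repr.norm_map x, EuclideanSpace.norm_eq, Real.sq_sqrt]
  exact Finset.sum_nonneg fun i _ => sq_nonneg _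

lemma repr_eigen (b : OrthonormalBasis (Fin n) ℂ (EuclideanSpace ℂ (Fin n)))
    (T : EuclideanSpace ℂ (Fin n) →ₗ[ℂ] EuclideanSpace ℂ (Fin n)) (lam : Fin n → ℝ)
    (hT : ∀ i, T (b i) = (lam i : ℂ) • b i) (x : EuclideanSpace ℂ (Fin n)) (j : Fin n) :
    b.repr (T x) j = (lam j : ℂ) * b.repr x j := by
  conv_lhs => rw [← b.sum_repr x]
  rw [map_sum, map_sum]
  simp only [_root_.map_smul, hT, LinearIsometryEquiv.map_smul, b.repr_self]
  rw [WithLp.ofLp_sum, Finset.sum_apply]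
  simp only [PiLp.smul_apply, EuclideanSpace.single_apply, smul_eq_mul]
  rw [Finset.sum_eq_single j]
  · simp [mul_comm]
  · intro i _ hij; simp [hij, Ne.symm hij]
  · simp

lemma conj_mul_lam (l : ℝ) (c : ℂ) :
    ((starRingEnd ℂ) c * ((l : ℂ) * c)).re = l * ‖c‖ ^ 2 := by
  have : (starRingEnd ℂ) c * ((l : ℂ) * c) = (l : ℂ) * (c * (starRingEnd ℂ) c) := by ring
  rw [this, Complex.mul_conj]
  norm_num [Complex.normSq_eq_norm_sq, ← Complex.ofReal_pow]

lemma rayleigh_eq (b : OrthonormalBasis (Fin n) ℂ (EuclideanSpace ℂ (Fin n)))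
    (T : EuclideanSpace ℂ (Fin n) →ₗ[ℂ] EuclideanSpace ℂ (Fin n)) (lam : Fin n → ℝ)
    (hT : ∀ i, T (b i) = (lam i : ℂ) • b i) (x : EuclideanSpace ℂ (Fin n)) :
    (inner ℂ x (T x) : ℂ).re = ∑ i, lam i * ‖b.repr x i‖ ^ 2 := by
  rw [← b.sum_inner_mul_inner x (T x), Complex.re_sum]
  refine Finset.sum_congr rfl fun i _ => ?_
  rw [← inner_conj_symm x (b i), ← b.repr_apply_apply x, ← b.repr_apply_apply (T x) i,
    repr_eigen b T lam hT]
  exact conj_mul_lam (lam i) (b.repr x i)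

lemma eig_diff_norm_sq (b : OrthonormalBasis (Fin n) ℂ (EuclideanSpace ℂ (Fin n)))
    (T : EuclideanSpace ℂ (Fin n) →ₗ[ℂ] EuclideanSpace ℂ (Fin n)) (lam : Fin n → ℝ)
    (hT : ∀ i, T (b i) = (lam i : ℂ) • b i) (x : EuclideanSpace ℂ (Fin n)) (μ : ℝ) :
    ‖T x - (μ : ℂ) • x‖ ^ 2 = ∑ i, (lam i - μ) ^ 2 * ‖b.repr x i‖ ^ 2 := by
  rw [norm_sq_repr b]
  refine Finset.sum_congr rfl fun i _ => ?_
  have : b.repr (T x - (μ : ℂ) • x) i = ((lam i : ℂ) - μ) * b.repr x i := by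
    rw [map_sub, LinearIsometryEquiv.map_smul]
    simp only [PiLp.sub_apply, PiLp.smul_apply, smul_eq_mul]
    rw [repr_eigen b T lam hT]; ring
  rw [this, norm_mul, mul_pow]
  congr 1
  rw [← Complex.ofReal_sub, Complex.norm_real, Real.norm_eq_abs, sq_abs]

/-- Rayleigh quotient lower bound. -/
lemma rayleigh_lower (b : OrthonormalBasis (Fin n) ℂ (EuclideanSpace ℂ (Fin n)))
    (T : EuclideanSpace ℂ (Fin n) →ₗ[ℂ] EuclideanSpace ℂ (Fin n)) (lam : Fin n → ℝ)
    (hT : ∀ i, T (b i) = (lam i : ℂ) • b i) (x : EuclideanSpace ℂ (Fin n)) (μ : ℝ)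
    (hμ : ∀ j, b.repr x j ≠ 0 → μ ≤ lam j) :
    μ * ‖x‖ ^ 2 ≤ (inner ℂ x (T x) : ℂ).re := by
  rw [rayleigh_eq b T lam hT, norm_sq_repr b, Finset.mul_sum]
  refine Finset.sum_le_sum fun j _ => ?_
  by_cases h : b.repr x j = 0
  · simp [h]
  · exact mul_le_mul_of_nonneg_right (hμ j h) (sq_nonneg _)

/-- Rayleigh quotient upper bound. -/
lemma rayleigh_upper (b : OrthonormalBasis (Fin n) ℂ (EuclideanSpace ℂ (Fin n)))
    (T : EuclideanSpace ℂ (Fin n) →ₗ[ℂ] EuclideanSpace ℂ (Fin n)) (lam : Fin n → ℝ)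
    (hT : ∀ i, T (b i) = (lam i : ℂ) • b i) (x : EuclideanSpace ℂ (Fin n)) (ν : ℝ)
    (hν : ∀ j, b.repr x j ≠ 0 → lam j ≤ ν) :
    (inner ℂ x (T x) : ℂ).re ≤ ν * ‖x‖ ^ 2 := by
  rw [rayleigh_eq b T lam hT, norm_sq_repr b, Finset.mul_sum]
  refine Finset.sum_le_sum fun j _ => ?_
  by_cases h : b.repr x j = 0
  · simp [h]
  · exact mul_le_mul_of_nonneg_right (hν j h) (sq_nonneg _)

lemma exists_onb_of_sorted (hn : 0 < n) {A : Matrix (Fin n) (Fin n) ℂ} {lam : Fin n → ℝ}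
    (hs : IsSortedSpectrum A lam) :
    ∃ b : OrthonormalBasis (Fin n) ℂ (EuclideanSpace ℂ (Fin n)),
      ∀ i, Matrix.toEuclideanLin A (b i) = (lam i : ℂ) • b i := by
  obtain ⟨-, w, hw, he⟩ := hs
  refine ⟨onb hn w hw, fun i => ?_⟩
  rw [onb_apply, ← mulVec_ee, he i, ee_smul]

/-- Rayleigh difference bound via operator norm. -/
lemma rayleigh_diff (A B : Matrix (Fin n) (Fin n) ℂ) (ε : ℝ) (hε : opNorm (A - B) ≤ ε)
    (x : EuclideanSpace ℂ (Fin n)) :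
    (inner ℂ x (Matrix.toEuclideanLin B x) : ℂ).re
      ≤ (inner ℂ x (Matrix.toEuclideanLin A x) : ℂ).re + ε * ‖x‖ ^ 2 := by
  have hd : Matrix.toEuclideanLin A x - Matrix.toEuclideanLin B x
      = Matrix.toEuclideanLin (A - B) x := by
    rw [map_sub]; rfl
  have h1 : (inner ℂ x (Matrix.toEuclideanLin A x) : ℂ).re
      - (inner ℂ x (Matrix.toEuclideanLin B x) : ℂ).re
      = (inner ℂ x (Matrix.toEuclideanLin (A - B) x) : ℂ).re := by
    rw [← hd, inner_sub_right]
    simp [Complex.sub_re]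
  have h2 : |(inner ℂ x (Matrix.toEuclideanLin (A - B) x) : ℂ).re| ≤ ε * ‖x‖ ^ 2 := by
    calc |(inner ℂ x (Matrix.toEuclideanLin (A - B) x) : ℂ).re|
        ≤ ‖(inner ℂ x (Matrix.toEuclideanLin (A - B) x) : ℂ)‖ := Complex.abs_re_le_norm _
      _ ≤ ‖x‖ * ‖Matrix.toEuclideanLin (A - B) x‖ := norm_inner_le_norm _ _
      _ ≤ ‖x‖ * (opNorm (A - B) * ‖x‖) := by
          exact mul_le_mul_of_nonneg_left (opNorm_le _ _) (norm_nonneg _)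
      _ ≤ ‖x‖ * (ε * ‖x‖) := by
          refine mul_le_mul_of_nonneg_left ?_ (norm_nonneg _)
          exact mul_le_mul_of_nonneg_right hε (norm_nonneg _)
      _ = ε * ‖x‖ ^ 2 := by ring
  nlinarith [abs_le.mp h2]

/-- Weyl-type comparison for the two smallest sorted eigenvalues. -/
lemma spectrum_compare (hn : 2 ≤ n) (A B : Matrix (Fin n) (Fin n) ℂ)
    (lamA lamB : Fin n → ℝ) (hA : IsSortedSpectrum A lamA) (hB : IsSortedSpectrum B lamB)
    (ε : ℝ) (hε : opNorm (A - B) ≤ ε) :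
    lamB ⟨0, by omega⟩ ≤ lamA ⟨0, by omega⟩ + ε ∧
    lamB ⟨1, by omega⟩ ≤ lamA ⟨1, by omega⟩ + ε := by
  have hn0 : 0 < n := by omega
  set i0 : Fin n := ⟨0, by omega⟩
  set i1 : Fin n := ⟨1, by omega⟩
  obtain ⟨a, ha⟩ := exists_onb_of_sorted hn0 hA
  obtain ⟨b, hb⟩ := exists_onb_of_sorted hn0 hB
  have hmA : Monotone lamA := hA.1
  have hmB : Monotone lamB := hB.1
  constructor
  · -- smallest eigenvalue
    have h1 : lamB i0 * ‖a i0‖ ^ 2 ≤ (inner ℂ (a i0) (Matrix.toEuclideanLin B (a i0)) : ℂ).re :=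
      rayleigh_lower b _ lamB hb (a i0) _ (fun j _ => hmB (by simp [i0, Fin.le_def]))
    have h2 := rayleigh_diff A B ε hε (a i0)
    have h3 : (inner ℂ (a i0) (Matrix.toEuclideanLin A (a i0)) : ℂ).re = lamA i0 := by
      rw [ha i0, inner_smul_right]
      have : (inner ℂ (a i0) (a i0) : ℂ) = 1 := by
        rw [← inner_conj_symm, orthonormal_iff_ite.mp a.orthonormal]
        simp
      rw [this]
      simp
    have hnorm : ‖a i0‖ = 1 := a.orthonormal.1 i0
    rw [hnorm] at h1 h2
    rw [h3] at h2
    nlinarith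
  · -- second eigenvalue
    obtain ⟨ca, cc, x, hx0, hxc, hb0⟩ :
        ∃ (ca cc : ℂ) (x : EuclideanSpace ℂ (Fin n)), x ≠ 0 ∧
          x = ca • a i0 + cc • a i1 ∧ (inner ℂ (b i0) x : ℂ) = 0 := by
      set α : ℂ := inner ℂ (b i0) (a i0)
      set β : ℂ := inner ℂ (b i0) (a i1)
      by_cases hα : α = 0
      · exact ⟨1, 0, a i0, by
          intro h
          have := a.orthonormal.1 i0
          rw [h] at this; simp at this, by simp, by exact hα⟩
      · refine ⟨β, -α, β • a i0 - α • a i1, ?_, by module, ?_⟩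
        · intro h
          have h2 : (inner ℂ (a i1) (β • a i0 - α • a i1) : ℂ) = -α := by
            rw [inner_sub_right, inner_smul_right, inner_smul_right,
              orthonormal_iff_ite.mp a.orthonormal, orthonormal_iff_ite.mp a.orthonormal]
            simp [i0, i1, Fin.ext_iff]
          rw [h, inner_zero_right] at h2
          exact hα (neg_eq_zero.mp h2.symm)
        · rw [inner_sub_right, inner_smul_right, inner_smul_right]
          ring
    -- coordinates of x in basis a vanish outside {i0, i1}
    have hcoord : ∀ j, j ≠ i0 → j ≠ i1 → a.repr x j = 0 := by
      intro j hj0 hj1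
      rw [hxc, map_add, LinearIsometryEquiv.map_smul, LinearIsometryEquiv.map_smul]
      simp only [PiLp.add_apply, PiLp.smul_apply, smul_eq_mul, a.repr_self,
        EuclideanSpace.single_apply]
      simp [hj0, hj1]
    have hup : (inner ℂ x (Matrix.toEuclideanLin A x) : ℂ).re ≤ lamA i1 * ‖x‖ ^ 2 := by
      refine rayleigh_upper a _ lamA ha x _ (fun j hj => ?_)
      by_cases hj0 : j = i0
      · exact hj0 ▸ hmA (by simp [i0, i1, Fin.le_def])
      by_cases hj1 : j = i1
      · exact le_of_eq (by rw [hj1])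
      · exact absurd (hcoord j hj0 hj1) hj
    have hlow : lamB i1 * ‖x‖ ^ 2 ≤ (inner ℂ x (Matrix.toEuclideanLin B x) : ℂ).re := by
      refine rayleigh_lower b _ lamB hb x _ (fun j hj => ?_)
      have hj0 : j ≠ i0 := by
        intro h
        rw [h, b.repr_apply_apply, hb0] at hj
        exact hj rfl
      refine hmB ?_
      rw [Fin.le_def]
      show (1 : ℕ) ≤ (j : ℕ)
      have : (j : ℕ) ≠ 0 := fun hv => hj0 (Fin.ext hv)
      omega
    have hdiff := rayleigh_diff A B ε hε x
    have hxpos : 0 < ‖x‖ ^ 2 := pow_pos (norm_pos_iff.mpr hx0) 2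
    nlinarith

-- rectangular versions
lemma mulVec_ee' {m : ℕ} (A : Matrix (Fin m) (Fin n) ℂ) (x : Fin n → ℂ) :
    ee (A *ᵥ x) = Matrix.toEuclideanLin A (ee x) := rfl

lemma opNorm_le' {m : ℕ} (A : Matrix (Fin m) (Fin n) ℂ) (x : EuclideanSpace ℂ (Fin n)) :
    ‖Matrix.toEuclideanLin A x‖ ≤ opNorm A * ‖x‖ :=
  (LinearMap.toContinuousLinearMap (Matrix.toEuclideanLin A)).le_opNorm x

lemma opNorm_sub_comm {m : ℕ} (A B : Matrix (Fin m) (Fin n) ℂ) :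
    opNorm (A - B) = opNorm (B - A) := by
  unfold opNorm
  rw [show B - A = -(A - B) from (neg_sub A B).symm, map_neg, map_neg, norm_neg]

lemma opNorm_zero {m : ℕ} : opNorm (0 : Matrix (Fin m) (Fin n) ℂ) = 0 := by
  unfold opNorm
  rw [map_zero, map_zero, norm_zero]

/-- Isometries preserve dot products. -/
lemma isometry_dot {m : ℕ} (Et : Matrix (Fin m) (Fin n) ℂ) (hEt : Etᴴ * Et = 1)
    (p q : Fin n → ℂ) : star (Et *ᵥ p) ⬝ᵥ (Et *ᵥ q) = star p ⬝ᵥ q := by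
  rw [star_mulVec, dotProduct_mulVec, vecMul_vecMul, hEt, vecMul_one]

lemma isometry_norm {m : ℕ} (Et : Matrix (Fin m) (Fin n) ℂ) (hEt : Etᴴ * Et = 1)
    (p : Fin n → ℂ) : ‖ee (Et *ᵥ p)‖ = ‖ee p‖ := by
  have h1 : (inner ℂ (ee (Et *ᵥ p)) (ee (Et *ᵥ p)) : ℂ) = inner ℂ (ee p) (ee p) := by
    rw [inner_ee, inner_ee, isometry_dot Et hEt]
  rw [inner_self_eq_norm_sq_to_K (𝕜 := ℂ) (ee (Et *ᵥ p)),
    inner_self_eq_norm_sq_to_K (𝕜 := ℂ) (ee p)] at h1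
  have h2 : ‖ee (Et *ᵥ p)‖ ^ 2 = ‖ee p‖ ^ 2 := by exact_mod_cast h1
  rw [← Real.sqrt_sq (norm_nonneg (ee (Et *ᵥ p))), ← Real.sqrt_sq (norm_nonneg (ee p)), h2]

set_option maxHeartbeats 2000000 in
/-- Ground state perturbation. -/
lemma ground_perturb {N : ℕ} (hN : 2 ≤ N) (H M' : Matrix (Fin N) (Fin N) ℂ)
    (lamH : Fin N → ℝ) (hlamH : IsSortedSpectrum H lamH)
    (g u : EuclideanSpace ℂ (Fin N)) (hg : ‖g‖ = 1) (hu : ‖u‖ = 1)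
    (hgeig : Matrix.toEuclideanLin H g = (lamH ⟨0, by omega⟩ : ℂ) • g)
    (μ ε δ : ℝ)
    (hueig : Matrix.toEuclideanLin M' u = (μ : ℂ) • u)
    (hμ : |μ - lamH ⟨0, by omega⟩| ≤ ε)
    (hδ : δ = lamH ⟨1, by omega⟩ - lamH ⟨0, by omega⟩) (hδ0 : 0 < δ)
    (hop : opNorm (H - M') ≤ ε) :
    ∃ φ : ℂ, ‖φ‖ = 1 ∧ ‖g - φ • u‖ ≤ 3 * ε / δ := by
  have hN0 : 0 < N := by omega
  set i0 : Fin N := ⟨0, by omega⟩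
  set i1 : Fin N := ⟨1, by omega⟩
  have hε0 : 0 ≤ ε := le_trans (opNorm_nonneg _) hop
  obtain ⟨bH, hbH⟩ := exists_onb_of_sorted hN0 hlamH
  have hmono : Monotone lamH := hlamH.1
  -- coordinates of g vanish away from i0
  have hdg : ∀ j, j ≠ i0 → bH.repr g j = 0 := by
    intro j hj
    have h1 : bH.repr (Matrix.toEuclideanLin H g) j = (lamH j : ℂ) * bH.repr g j :=
      repr_eigen bH _ lamH hbH g j
    have h2 : bH.repr (Matrix.toEuclideanLin H g) j = (lamH i0 : ℂ) * bH.repr g j := by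
      rw [hgeig, LinearIsometryEquiv.map_smul]
      simp [PiLp.smul_apply]
    have h3 : ((lamH j : ℂ) - (lamH i0 : ℂ)) * bH.repr g j = 0 := by
      rw [sub_mul, h1.symm.trans h2]; ring
    have hone : i1 ≤ j := by
      rw [Fin.le_def]
      show (1 : ℕ) ≤ (j : ℕ)
      have : (j : ℕ) ≠ 0 := fun hv => hj (Fin.ext hv)
      omega
    have h4 : lamH j - lamH i0 ≥ δ := by
      have := hmono hone
      rw [hδ]; linarith
    rcases mul_eq_zero.mp h3 with h | h
    · exfalso
      have : (lamH j : ℂ) - (lamH i0 : ℂ) = ((lamH j - lamH i0 : ℝ) : ℂ) := by push_cast; ring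
      rw [this, Complex.ofReal_eq_zero] at h
      linarith
    · exact h
  -- g = (bH.repr g i0) • bH i0
  have hgrep : g = bH.repr g i0 • bH i0 := by
    conv_lhs => rw [← bH.sum_repr g]
    rw [Finset.sum_eq_single i0]
    · intro i _ hi; rw [hdg i hi, zero_smul]
    · simp
  have hd0 : bH.repr g i0 ≠ 0 := by
    intro h
    rw [hgrep, h, zero_smul, norm_zero] at hg
    norm_num at hg
  set α : ℂ := inner ℂ g u with hα
  set w : EuclideanSpace ℂ (Fin N) := u - α • g with hw
  have hgw : (inner ℂ g w : ℂ) = 0 := by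
    rw [hw, inner_sub_right, inner_smul_right, inner_self_eq_norm_sq_to_K, hg]
    simp [hα]
  have hb0w : bH.repr w i0 = 0 := by
    have h1 : (inner ℂ g w : ℂ) = (starRingEnd ℂ) (bH.repr g i0) * bH.repr w i0 := by
      conv_lhs => rw [hgrep]
      rw [inner_smul_left, ← bH.repr_apply_apply]
    rw [hgw] at h1
    rcases mul_eq_zero.mp h1.symm with h | h
    · exact absurd (by simpa using h) hd0
    · exact h
  -- lower bound δ²‖w‖² ≤ ‖(H - lamH0)w‖²
  have hlow : δ ^ 2 * ‖w‖ ^ 2 ≤ ‖Matrix.toEuclideanLin H w - (lamH i0 : ℂ) • w‖ ^ 2 := by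
    rw [eig_diff_norm_sq bH _ lamH hbH w (lamH i0), norm_sq_repr bH w, Finset.mul_sum]
    refine Finset.sum_le_sum fun j _ => ?_
    by_cases hj : j = i0
    · rw [hj, hb0w]; simp
    · have hone : i1 ≤ j := by
        rw [Fin.le_def]
        show (1 : ℕ) ≤ (j : ℕ)
        have : (j : ℕ) ≠ 0 := fun hv => hj (Fin.ext hv)
        omega
      have h4 : lamH j - lamH i0 ≥ δ := by
        have := hmono hone
        rw [hδ]; linarith
      have : δ ^ 2 ≤ (lamH j - lamH i0) ^ 2 := by nlinarith
      exact mul_le_mul_of_nonneg_right this (sq_nonneg _)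
  -- upper bound ‖(H - lamH0)u‖ ≤ 2ε
  have hup : ‖Matrix.toEuclideanLin H u - (lamH i0 : ℂ) • u‖ ≤ 2 * ε := by
    have hsplit : Matrix.toEuclideanLin H u - (lamH i0 : ℂ) • u
        = (Matrix.toEuclideanLin H u - Matrix.toEuclideanLin M' u)
          + ((μ : ℂ) • u - (lamH i0 : ℂ) • u) := by
      rw [hueig]; abel
    rw [hsplit]
    refine le_trans (norm_add_le _ _) ?_
    have h1 : ‖Matrix.toEuclideanLin H u - Matrix.toEuclideanLin M' u‖ ≤ ε := by
      have : Matrix.toEuclideanLin H u - Matrix.toEuclideanLin M' u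
          = Matrix.toEuclideanLin (H - M') u := by rw [map_sub]; rfl
      rw [this]
      calc ‖Matrix.toEuclideanLin (H - M') u‖ ≤ opNorm (H - M') * ‖u‖ := opNorm_le _ _
        _ ≤ ε := by rw [hu, mul_one]; exact hop
    have h2 : ‖(μ : ℂ) • u - (lamH i0 : ℂ) • u‖ ≤ ε := by
      have : (μ : ℂ) • u - (lamH i0 : ℂ) • u = ((μ - lamH i0 : ℝ) : ℂ) • u := by
        push_cast; rw [sub_smul]
      rw [this, norm_smul, hu, mul_one, Complex.norm_real, Real.norm_eq_abs]
      exact hμ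
    linarith
  -- (H - lamH0) w = (H - lamH0) u
  have heq : Matrix.toEuclideanLin H w - (lamH i0 : ℂ) • w
      = Matrix.toEuclideanLin H u - (lamH i0 : ℂ) • u := by
    rw [hw, map_sub, _root_.map_smul, smul_sub, hgeig, smul_smul, smul_smul, mul_comm]
    abel
  -- ‖w‖ ≤ 2ε/δ
  have hwb : δ * ‖w‖ ≤ 2 * ε := by
    have h1 : δ ^ 2 * ‖w‖ ^ 2 ≤ (2 * ε) ^ 2 := by
      rw [heq] at hlow
      have h2 := pow_le_pow_left₀ (norm_nonneg (Matrix.toEuclideanLin H u - (lamH i0 : ℂ) • u)) hup 2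
      linarith
    calc δ * ‖w‖ = Real.sqrt ((δ * ‖w‖) ^ 2) := (Real.sqrt_sq (by positivity)).symm
      _ ≤ Real.sqrt ((2 * ε) ^ 2) := Real.sqrt_le_sqrt (by rw [mul_pow]; exact h1)
      _ = 2 * ε := Real.sqrt_sq (by linarith)
  -- ‖α‖² + ‖w‖² = 1
  have hαw : ‖α‖ ^ 2 + ‖w‖ ^ 2 = 1 := by
    have hdecomp : u = α • g + w := by rw [hw]; abel
    have hiz : (inner ℂ (α • g) w : ℂ) = 0 := by
      rw [inner_smul_left, hgw, mul_zero]
    have := norm_add_sq (𝕜 := ℂ) (α • g) w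
    rw [← hdecomp, hu, hiz, norm_smul, hg, mul_one] at this
    simpa using this.symm
  have hα2 : ‖α‖ ^ 2 ≤ 1 := by linarith [sq_nonneg (‖w‖ : ℝ)]
  have hα1 : ‖α‖ ≤ 1 := by
    calc ‖α‖ = Real.sqrt (‖α‖ ^ 2) := (Real.sqrt_sq (norm_nonneg α)).symm
      _ ≤ Real.sqrt 1 := Real.sqrt_le_sqrt hα2
      _ = 1 := Real.sqrt_one
  -- choose the phase
  refine ⟨if hαz : α = 0 then 1 else (‖α‖ : ℂ) / α, ?_, ?_⟩
  · by_cases hαz : α = 0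
    · simp [hαz]
    · rw [dif_neg hαz, norm_div, Complex.norm_real, Real.norm_eq_abs, abs_norm,
        div_self (norm_ne_zero_iff.mpr hαz)]
  · set φ : ℂ := if hαz : α = 0 then 1 else (‖α‖ : ℂ) / α with hφ
    have hre : (inner ℂ g (φ • u) : ℂ).re = ‖α‖ := by
      rw [inner_smul_right, ← hα]
      by_cases hαz : α = 0
      · simp [hφ, hαz]
      · rw [hφ, dif_neg hαz, div_mul_cancel₀ _ hαz]
        simp
    have hφn : ‖φ‖ = 1 := by
      by_cases hαz : α = 0
      · simp [hφ, hαz]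
      · rw [hφ, dif_neg hαz, norm_div, Complex.norm_real, Real.norm_eq_abs, abs_norm,
          div_self (norm_ne_zero_iff.mpr hαz)]
    have hsq : ‖g - φ • u‖ ^ 2 = 2 - 2 * ‖α‖ := by
      have := norm_sub_sq (𝕜 := ℂ) g (φ • u)
      simp only [RCLike.re_to_complex] at this
      rw [hg, norm_smul, hφn, hu, hre] at this
      rw [this]; ring
    have hbound : ‖g - φ • u‖ ^ 2 ≤ (3 * ε / δ) ^ 2 := by
      rw [hsq]
      have hmul : ‖α‖ * ‖α‖ ≤ ‖α‖ := by simpa using mul_le_mul_of_nonneg_left hα1 (norm_nonneg α)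
      have h1 : 2 - 2 * ‖α‖ ≤ 2 * ‖w‖ ^ 2 := by linarith [hαw, pow_two (‖α‖ : ℝ)]
      have h2 : ‖w‖ ≤ 2 * ε / δ := by
        rw [le_div_iff₀ hδ0]
        linarith [hwb]
      have h3 : ‖w‖ ^ 2 ≤ (2 * ε / δ) ^ 2 := pow_le_pow_left₀ (norm_nonneg w) h2 2
      have h4 : (2 : ℝ) * (2 * ε / δ) ^ 2 ≤ (3 * ε / δ) ^ 2 := by
        have hδ2 : (0:ℝ) < δ ^ 2 := by positivity
        rw [div_pow, div_pow, ← mul_div_assoc, div_le_div_iff₀ hδ2 hδ2]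
        nlinarith [mul_nonneg (sq_nonneg ε) (sq_nonneg δ)]
      linarith
    have h5 : (0:ℝ) ≤ 3 * ε / δ := by positivity
    calc ‖g - φ • u‖ = Real.sqrt (‖g - φ • u‖ ^ 2) := (Real.sqrt_sq (norm_nonneg _)).symm
      _ ≤ Real.sqrt ((3 * ε / δ) ^ 2) := Real.sqrt_le_sqrt hbound
      _ = 3 * ε / δ := Real.sqrt_sq h5


lemma norm_one_of_dot (x : Fin n → ℂ) (h : star x ⬝ᵥ x = 1) : ‖ee x‖ = 1 := by
  have h1 : (inner ℂ (ee x) (ee x) : ℂ) = 1 := by rw [inner_ee, h]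
  rw [inner_self_eq_norm_sq_to_K (𝕜 := ℂ) (ee x)] at h1
  have h2 : ‖ee x‖ ^ 2 = 1 := by
    have h3 : ((‖ee x‖ ^ 2 : ℝ) : ℂ) = ((1 : ℝ) : ℂ) := by push_cast; simpa using h1
    exact_mod_cast h3
  nlinarith [norm_nonneg (ee x)]

end GSim

open GSim in
set_option maxHeartbeats 2000000 in
/-- **Ground state simulation** (Lemma 3.2): there is an absolute constant `C > 0` such
that if `H` has a nondegenerate ground state `g` with spectral gap `δ` and `(Hsim, E)`
simulates `H` with error `(η, ε)` where `2ε < δ`, then `Hsim` has a nondegenerate ground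
state `gsim` (for a suitable phase) with `‖E g - gsim‖ ≤ η + C ε / δ`. -/
theorem ground_state_simulation :
    ∃ C : ℝ, 0 < C ∧
      ∀ {N M : ℕ} (hNM : N ≤ M) (hN : 2 ≤ N)
        (H : Matrix (Fin N) (Fin N) ℂ) (_hH : H.IsHermitian)
        (Hsim : Matrix (Fin M) (Fin M) ℂ) (_hsim : Hsim.IsHermitian)
        (E : Matrix (Fin M) (Fin N) ℂ) (_hE : Eᴴ * E = 1)
        (η ε δ : ℝ) (lamH : Fin N → ℝ)
        (_hlamH : IsSortedSpectrum H lamH)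
        (g : Fin N → ℂ) (_hg : vecNorm g = 1)
        (_hground : H.mulVec g = (lamH ⟨0, by omega⟩ : ℂ) • g)
        (_hgap : δ = lamH ⟨1, by omega⟩ - lamH ⟨0, by omega⟩)
        (_hδ : 0 < δ)
        (_hsimul : Simulates hNM Hsim E H η ε)
        (_hsmall : 2 * ε < δ)
        (lamS : Fin M → ℝ) (_hlamS : IsSortedSpectrum Hsim lamS),
        lamS ⟨0, by omega⟩ < lamS ⟨1, by omega⟩ ∧
        ∃ gsim : Fin M → ℂ, vecNorm gsim = 1 ∧
          Hsim.mulVec gsim = (lamS ⟨0, by omega⟩ : ℂ) • gsim ∧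
          vecNorm (E.mulVec g - gsim) ≤ η + C * ε / δ := by
  refine ⟨3, by norm_num, ?_⟩
  intro N M hNM hN H _hH Hsim _hsim E _hE η ε δ lamH hlamH g hg hground hgap hδ hsimul
    hsmall lamS hlamS
  obtain ⟨lam, Et, v, hlam, hEt, hv, hveig, hrange, hS2, hS3⟩ := hsimul
  have hM2 : 2 ≤ M := le_trans hN hNM
  have hε0 : 0 ≤ ε := le_trans (opNorm_nonneg _) hS2
  -- pull back the eigenvectors v through Et
  have hmem : ∀ i, v i ∈ LinearMap.range Et.mulVecLin := by
    rw [hrange]; exact fun i => Submodule.subset_span ⟨i, rfl⟩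
  choose z hz using fun i => hmem i
  simp only [Matrix.mulVecLin_apply] at hz
  -- orthonormality of z
  have hzon : ∀ i j, star (z i) ⬝ᵥ z j = if i = j then 1 else 0 := by
    intro i j
    rw [← isometry_dot Et hEt, hz, hz, hv]
  -- eigen equations for M' := Etᴴ * Hsim * Et
  set M' : Matrix (Fin N) (Fin N) ℂ := Etᴴ * Hsim * Et with hM'
  have hEtv : ∀ i, Etᴴ *ᵥ v i = z i := by
    intro i
    rw [← hz, Matrix.mulVec_mulVec, hEt, Matrix.one_mulVec]
  have hzeig : ∀ i, M' *ᵥ z i = (lam (Fin.castLE hNM i) : ℂ) • z i := by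
    intro i
    rw [hM', ← Matrix.mulVec_mulVec, hz, ← Matrix.mulVec_mulVec, hveig i,
      Matrix.mulVec_smul, hEtv]
  set lamM : Fin N → ℝ := fun i => lam (Fin.castLE hNM i) with hlamMdef
  have hlamM : IsSortedSpectrum M' lamM := by
    refine ⟨fun i j hij => hlam.1 ?_, z, hzon, hzeig⟩
    rw [Fin.le_def] at hij ⊢
    exact hij
  -- eigenvalue comparisons
  have hc1 := spectrum_compare hN H M' lamH lamM hlamH hlamM ε hS2
  have hc2 := spectrum_compare hN M' H lamM lamH hlamM hlamH ε (by rwa [opNorm_sub_comm])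
  have hzero : opNorm (Hsim - Hsim) ≤ 0 := by rw [sub_self]; exact le_of_eq opNorm_zero
  have hc3 := spectrum_compare hM2 Hsim Hsim lam lamS hlam hlamS 0 hzero
  have hc4 := spectrum_compare hM2 Hsim Hsim lamS lam hlamS hlam 0 hzero
  have hls0 : lamS ⟨0, by omega⟩ = lam ⟨0, by omega⟩ := by
    have := hc3.1; have := hc4.1; linarith
  have hls1 : lamS ⟨1, by omega⟩ = lam ⟨1, by omega⟩ := by
    have := hc3.2; have := hc4.2; linarith
  have hcast0 : Fin.castLE hNM (⟨0, by omega⟩ : Fin N) = (⟨0, by omega⟩ : Fin M) := rfl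
  have hcast1 : Fin.castLE hNM (⟨1, by omega⟩ : Fin N) = (⟨1, by omega⟩ : Fin M) := rfl
  have hlamM0 : lamM ⟨0, by omega⟩ = lam ⟨0, by omega⟩ := rfl
  have hlamM1 : lamM ⟨1, by omega⟩ = lam ⟨1, by omega⟩ := rfl
  constructor
  · -- nondegeneracy
    rw [hls0, hls1, ← hlamM0, ← hlamM1]
    have h1 := hc1.1
    have h2 := hc2.2
    rw [hgap] at hsmall
    linarith
  · -- the ground state
    have hg1 : ‖ee g‖ = 1 := by rw [← vecNorm_eq]; exact hg
    have hz1 : ‖ee (z ⟨0, by omega⟩)‖ = 1 := by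
      apply norm_one_of_dot
      rw [hzon]; simp
    have hgeig : Matrix.toEuclideanLin H (ee g) = ((lamH ⟨0, by omega⟩ : ℝ) : ℂ) • ee g := by
      rw [← mulVec_ee, hground, ee_smul]
    have hueig : Matrix.toEuclideanLin M' (ee (z ⟨0, by omega⟩))
        = ((lamM ⟨0, by omega⟩ : ℝ) : ℂ) • ee (z ⟨0, by omega⟩) := by
      rw [← mulVec_ee, hzeig, ee_smul]
    have hμ : |lamM ⟨0, by omega⟩ - lamH ⟨0, by omega⟩| ≤ ε := by
      have h1 := hc1.1
      have h2 := hc2.1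
      rw [abs_le]
      constructor <;> linarith
    obtain ⟨φ, hφ1, hφb⟩ := ground_perturb hN H M' lamH hlamH (ee g) (ee (z ⟨0, by omega⟩))
      hg1 hz1 hgeig (lamM ⟨0, by omega⟩) ε δ hueig hμ hgap hδ hS2
    refine ⟨φ • v ⟨0, by omega⟩, ?_, ?_, ?_⟩
    · rw [vecNorm_eq, ee_smul, norm_smul, hφ1, one_mul]
      apply norm_one_of_dot
      rw [hv]; simp
    · rw [Matrix.mulVec_smul, hveig, smul_comm]
      congr 2
      rw [hls0]
      rfl
    · have hsplit : E *ᵥ g - φ • v ⟨0, by omega⟩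
          = (E - Et) *ᵥ g + Et *ᵥ (g - φ • z ⟨0, by omega⟩) := by
        rw [Matrix.sub_mulVec, Matrix.mulVec_sub, Matrix.mulVec_smul, hz]
        abel
      rw [hsplit, vecNorm_eq]
      have hee : ee ((E - Et) *ᵥ g + Et *ᵥ (g - φ • z ⟨0, by omega⟩))
          = ee ((E - Et) *ᵥ g) + ee (Et *ᵥ (g - φ • z ⟨0, by omega⟩)) := rfl
      rw [hee]
      refine le_trans (norm_add_le _ _) ?_
      have hb1 : ‖ee ((E - Et) *ᵥ g)‖ ≤ η := by
        rw [mulVec_ee']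
        calc ‖Matrix.toEuclideanLin (E - Et) (ee g)‖ ≤ opNorm (E - Et) * ‖ee g‖ :=
              opNorm_le' _ _
          _ ≤ η := by rw [hg1, mul_one]; exact hS3
      have hb2 : ‖ee (Et *ᵥ (g - φ • z ⟨0, by omega⟩))‖ ≤ 3 * ε / δ := by
        rw [isometry_norm Et hEt, ee_sub, ee_smul]
        exact hφb
      have : η + 3 * ε / δ = η + 3 * ε / δ := rfl
      linarith
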